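/- arXiv:1001.4695 — 2 statements merged into one kernel-verified Lean document; each statement's English description precedes it below -/
import Mathlib

section
/- Let p be a polynomial over ℂ and P the unique polynomial with P(0) = 0 and P(z) - P(z-1) = p(z). Define S(x,y) := P(y) - P(x-1). Then S satisfies translation invariance: for all x, y, s ∈ ℂ, S applied to the shifted polynomial ν ↦ p(ν+s) over bounds (x,y) equals S applied to p over bounds (x+s, y+s). -/
/-- A complex polynomial with `R(z) = R(z-1)` for all `z` is constant. -/
lemma poly_periodic_const (R : Polynomial ℂ) (h : ∀ z : ℂ, R.eval z = R.eval (z - 1)) :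
    ∀ z : ℂ, R.eval z = R.eval 0 := by
  have hnat : ∀ n : ℕ, R.eval (n : ℂ) = R.eval 0 := by
    intro n
    induction n with
    | zero => simp
    | succ k ih =>
      have := h ((k : ℂ) + 1)
      push_cast
      rw [this]; simpa using ih
  have hzero : R - Polynomial.C (R.eval 0) = 0 := by
    apply Polynomial.eq_zero_of_infinite_isRoot
    apply Set.Infinite.mono (s := Set.range (fun n : ℕ => (n : ℂ)))
    · rintro _ ⟨n, rfl⟩
      simp [Polynomial.IsRoot, hnat n]
    · exact Set.infinite_range_of_injective Nat.cast_injective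
  intro z
  have := congrArg (Polynomial.eval z) hzero
  simpa [sub_eq_zero] using this

/-- Translation invariance of the fractional sum of a polynomial: if `P` is the discrete
antiderivative of `p` and `Q` is the discrete antiderivative of `ν ↦ p(ν + s)`, then
`Q(y) - Q(x-1) = P(y+s) - P(x+s-1)`. -/
theorem fracSum_poly_translation_invariance (p P Q : Polynomial ℂ) (s : ℂ)
    (hP0 : P.eval 0 = 0) (hP : ∀ z : ℂ, P.eval z - P.eval (z - 1) = p.eval z)
    (hQ0 : Q.eval 0 = 0) (hQ : ∀ z : ℂ, Q.eval z - Q.eval (z - 1) = p.eval (z + s)) :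
    ∀ x y : ℂ, Q.eval y - Q.eval (x - 1) = P.eval (y + s) - P.eval (x + s - 1) := by
  set R := P.comp (Polynomial.X + Polynomial.C s) - Q with hR
  have hReval : ∀ z : ℂ, R.eval z = P.eval (z + s) - Q.eval z := by
    intro z; simp [hR]
  have hper : ∀ z : ℂ, R.eval z = R.eval (z - 1) := by
    intro z
    rw [hReval, hReval]
    have h1 := hP (z + s)
    have h2 := hQ z
    have : z - 1 + s = z + s - 1 := by ring
    rw [this]
    linear_combination h1 - h2
  have hc := poly_periodic_const R hper
  intro x y
  have h1 := hc y
  have h2 := hc (x - 1)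
  rw [hReval, hReval] at h1 h2
  have hx : x - 1 + s = x + s - 1 := by ring
  rw [hx] at h2
  linear_combination h2 - h1
end

section
/- For a constant c ∈ ℂ, any function S(x,y) (summation over complex bounds) satisfying continued summation (S(x,y) + S(y+1,z) = S(x,z)), translation invariance, linearity, and S(1,1)-consistency applied to the constant function c must satisfy: the sum from 1 to 1/2 of c equals c/2. -/
/-- Any summation theory `S` (assigning to bounds `x, y` and a function `f` a complex
number) satisfying continued summation, translation invariance, linearity, and
consistency with the classical one-term sum, assigns the value `c/2` to the sum of the
constant `c` from `1` to `1/2`. -/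
theorem sum_const_half (S : ℂ → ℂ → (ℂ → ℂ) → ℂ)
    (hS1 : ∀ x y z : ℂ, ∀ f : ℂ → ℂ, S x y f + S (y + 1) z f = S x z f)
    (hS2 : ∀ x y s : ℂ, ∀ f : ℂ → ℂ, S (x + s) (y + s) f = S x y (fun ν => f (ν + s)))
    (hS3 : ∀ x y : ℂ, ∀ f g : ℂ → ℂ, ∀ lam mu : ℂ,
      S x y (fun ν => lam * f ν + mu * g ν) = lam * S x y f + mu * S x y g)
    (hS4 : ∀ f : ℂ → ℂ, S 1 1 f = f 1)
    (c : ℂ) :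
    S 1 (1 / 2) (fun _ => c) = c / 2 := by
  have h1 := hS1 1 (1/2) 1 (fun _ => c)
  have h2 := hS2 1 (1/2) (1/2) (fun _ => c)
  have h4 := hS4 (fun _ => c)
  norm_num at h1 h2 h4
  rw [h2, h4] at h1
  linear_combination h1 / 2
end
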